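/- The Laplace polynomials satisfy the three-term recurrences P_{k+1}(t) = t·P_k(t) + k·P_{k−1}(t) and Q_{k+1}(t) = t·Q_k(t) + (k+1)·Q_{k−1}(t) for all integers k ≥ 1. -/
import Mathlib


open Polynomial

/-- The Laplace polynomials `P_k`. -/
noncomputable def laplaceP : ℕ → Polynomial ℝ
  | 0 => 1
  | k + 1 => X * laplaceP k + derivative (laplaceP k)

/-- The Laplace polynomials `Q_k`. -/
noncomputable def laplaceQ : ℕ → Polynomial ℝ
  | 0 => 1
  | k + 1 => laplaceP (k + 1) + derivative (laplaceQ k)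

lemma laplaceP_succ (k : ℕ) :
    laplaceP (k + 1) = X * laplaceP k + derivative (laplaceP k) := rfl

lemma laplaceQ_succ (k : ℕ) :
    laplaceQ (k + 1) = laplaceP (k + 1) + derivative (laplaceQ k) := rfl

lemma dP : ∀ k : ℕ, derivative (laplaceP (k + 1)) = C ((k : ℝ) + 1) * laplaceP k := by
  intro k
  induction k with
  | zero => simp [laplaceP]
  | succ n ih =>
    rw [laplaceP_succ (n + 1), derivative_add, derivative_mul, derivative_X, ih,
      derivative_mul, derivative_C]
    push_cast
    simp only [C_add, C_1, map_ofNat]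
    linear_combination (-(C (n : ℝ) + 1)) * laplaceP_succ n

lemma dQsucc (k : ℕ) : derivative (laplaceQ (k + 1)) =
    C ((k : ℝ) + 1) * laplaceP k + derivative (derivative (laplaceQ k)) := by
  rw [laplaceQ_succ k, derivative_add, dP k]

lemma dD : ∀ k : ℕ, C ((k : ℝ) + 1) * laplaceP k + derivative (laplaceQ (k + 1)) =
    X * derivative (laplaceQ k) + C ((k : ℝ) + 2) * laplaceQ k := by
  intro k
  induction k with
  | zero =>
    simp [laplaceQ, laplaceP, map_ofNat]
    norm_num
  | succ n ih =>
    rw [dQsucc n] at ih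
    have h2 := congrArg derivative ih
    simp only [derivative_add, derivative_mul, derivative_C, derivative_X, zero_mul, one_mul,
      zero_add] at h2
    rw [laplaceQ_succ (n + 1), derivative_add, dP (n + 1), dQsucc n, laplaceQ_succ n,
      derivative_add, derivative_mul, derivative_C, laplaceP_succ n]
    push_cast at h2 ⊢
    simp only [C_add, C_1, map_ofNat] at h2 ⊢
    linear_combination h2

theorem laplace_three_term (k : ℕ) (hk : 1 ≤ k) :
    laplaceP (k + 1) = X * laplaceP k + C (k : ℝ) * laplaceP (k - 1) ∧
      laplaceQ (k + 1) = X * laplaceQ k + C ((k : ℝ) + 1) * laplaceQ (k - 1) := by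
  obtain ⟨m, rfl⟩ := Nat.exists_eq_add_of_le hk
  rw [Nat.add_comm 1 m]
  simp only [Nat.add_sub_cancel]
  constructor
  · rw [laplaceP_succ (m + 1), dP m]
    push_cast
    simp only [C_add, C_1]
  · have hd := dD m
    rw [dQsucc m] at hd
    rw [laplaceQ_succ (m + 1), laplaceP_succ (m + 1), dP m, dQsucc m, laplaceQ_succ m]
    push_cast at hd ⊢
    simp only [C_add, C_1, map_ofNat] at hd ⊢
    linear_combination hd
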